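/- arXiv:2310.18934 — 6 statements merged into one kernel-verified Lean document; each statement's English description precedes it below -/
import Mathlib

section
/- Let n be a positive integer and let B₁, …, Bₙ be 2×2 complex matrices that pairwise commute (Bᵢ·Bⱼ = Bⱼ·Bᵢ for all i, j). Then there exist complex numbers λ₁, …, λₙ such that for every x = (x₁, …, xₙ) ∈ ℂⁿ one has (Tr(∑ᵢ xᵢBᵢ))² − 4·det(∑ᵢ xᵢBᵢ) = (∑ᵢ xᵢλᵢ)². -/
open Matrix BigOperators

/-- Pointwise linear-algebra form of the factorization of the Hitchin morphism through
the spectral base: for pairwise commuting 2×2 complex matrices `B i`, the quadratic form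
`(Tr φ)² - 4 det φ` of `φ = ∑ xᵢ Bᵢ` is the square of a linear form. -/
theorem stmt_0 (n : ℕ) (hn : 0 < n) (B : Fin n → Matrix (Fin 2) (Fin 2) ℂ)
    (hcomm : ∀ i j, B i * B j = B j * B i) :
    ∃ lam : Fin n → ℂ, ∀ x : Fin n → ℂ,
      (Matrix.trace (∑ i, x i • B i)) ^ 2 - 4 * (∑ i, x i • B i).det
        = (∑ i, x i * lam i) ^ 2 := by
  classical
  -- entrywise commutation relations
  have hbc : ∀ i j, B i 0 1 * B j 1 0 = B j 0 1 * B i 1 0 := by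
    intro i j
    have h := congrFun (congrFun (hcomm i j) 0) 0
    simp [Matrix.mul_apply, Fin.sum_univ_two] at h
    linear_combination h
  have hpb : ∀ i j, (B i 0 0 - B i 1 1) * B j 0 1 = (B j 0 0 - B j 1 1) * B i 0 1 := by
    intro i j
    have h := congrFun (congrFun (hcomm i j) 0) 1
    simp [Matrix.mul_apply, Fin.sum_univ_two] at h
    linear_combination h
  have hpc : ∀ i j, (B i 0 0 - B i 1 1) * B j 1 0 = (B j 0 0 - B j 1 1) * B i 1 0 := by
    intro i j
    have h := congrFun (congrFun (hcomm i j) 1) 0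
    simp [Matrix.mul_apply, Fin.sum_univ_two] at h
    linear_combination -h
  -- the Gram coefficients
  set Q : Fin n → Fin n → ℂ := fun i j =>
    (B i 0 0 - B i 1 1) * (B j 0 0 - B j 1 1) + 4 * (B i 0 1 * B j 1 0) with hQdef
  have key : ∀ i j k, Q i j * Q k k = Q i k * Q j k := by
    intro i j k
    simp only [hQdef]
    linear_combination (-4 * (B i 0 0 - B i 1 1) * B k 1 0) * hpb k j
      + (4 * (B k 0 0 - B k 1 1) * B i 0 1) * hpc k j
      + (16 * B i 0 1 * B k 1 0) * hbc k j
  -- rank-one factorization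
  have hfact : ∃ lam : Fin n → ℂ, ∀ i j, lam i * lam j = Q i j := by
    by_cases hz : ∀ i j, Q i j = 0
    · exact ⟨0, fun i j => by simp [hz i j]⟩
    · push_neg at hz
      obtain ⟨i0, j0, hij0⟩ := hz
      have hj0 : Q j0 j0 ≠ 0 := by
        intro h0
        have h2 := key i0 i0 j0
        rw [h0, mul_zero] at h2
        exact hij0 (mul_self_eq_zero.mp h2.symm)
      obtain ⟨mu, hmu⟩ := IsAlgClosed.exists_pow_nat_eq (Q j0 j0) (n := 2) (by norm_num)
      have hmune : mu ≠ 0 := by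
        intro h; rw [h] at hmu; rw [← hmu] at hj0; simp at hj0
      have hmu2 : mu * mu = Q j0 j0 := by rw [← hmu]; ring
      refine ⟨fun i => Q i j0 / mu, fun i j => ?_⟩
      have hk : Q i j0 * Q j j0 = Q i j * (mu * mu) := by
        rw [hmu2]; exact (key i j j0).symm
      rw [div_mul_div_comm, hk, mul_div_assoc,
        div_self (mul_ne_zero hmune hmune), mul_one]
  obtain ⟨lam, hl⟩ := hfact
  refine ⟨lam, fun x => ?_⟩
  have hentry : ∀ (r s : Fin 2), (∑ i, x i • B i) r s = ∑ i, x i * B i r s := by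
    intro r s
    simp [Matrix.sum_apply, Matrix.smul_apply, smul_eq_mul]
  rw [Matrix.trace_fin_two, Matrix.det_fin_two, hentry 0 0, hentry 0 1, hentry 1 0,
    hentry 1 1]
  have hsub : (∑ i, x i * B i 0 0) - (∑ i, x i * B i 1 1)
      = ∑ i, x i * (B i 0 0 - B i 1 1) := by
    rw [← Finset.sum_sub_distrib]
    exact Finset.sum_congr rfl fun i _ => by ring
  have hms : ∀ (f g : Fin n → ℂ), (∑ i, f i) * (∑ j, g j) = ∑ i, ∑ j, f i * g j := by
    intro f g; exact Finset.sum_mul_sum _ _ _ _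
  have hdouble : (∑ i, x i * (B i 0 0 - B i 1 1)) * (∑ i, x i * (B i 0 0 - B i 1 1))
      + 4 * ((∑ i, x i * B i 0 1) * (∑ i, x i * B i 1 0))
      = (∑ i, x i * lam i) * (∑ i, x i * lam i) := by
    rw [hms, hms, hms, Finset.mul_sum, ← Finset.sum_add_distrib]
    refine Finset.sum_congr rfl fun i _ => ?_
    rw [Finset.mul_sum, ← Finset.sum_add_distrib]
    refine Finset.sum_congr rfl fun j _ => ?_
    have := hl i j
    simp only [hQdef] at this
    linear_combination x i * x j * this.symm
  linear_combination hdouble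
    + ((∑ i, x i * B i 0 0) - (∑ i, x i * B i 1 1) + ∑ i, x i * (B i 0 0 - B i 1 1)) * hsub
end

section
/- Let n be a positive integer and let B₁, …, Bₙ be 2×2 complex matrices that pairwise commute and each have trace zero. Then there exist complex numbers λ₁, …, λₙ such that for every x = (x₁, …, xₙ) ∈ ℂⁿ one has det(∑ᵢ xᵢBᵢ) = −(∑ᵢ xᵢλᵢ)². -/
open Matrix BigOperators

/-- Cayley–Hamilton for 2×2 matrices, by hand. -/
lemma ch2 (M : Matrix (Fin 2) (Fin 2) ℂ) :
    M * M = Matrix.trace M • M - Matrix.det M • (1 : Matrix (Fin 2) (Fin 2) ℂ) := by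
  ext i j
  fin_cases i <;> fin_cases j <;>
    simp [Matrix.mul_apply, Fin.sum_univ_two, Matrix.trace_fin_two, Matrix.det_fin_two,
      Matrix.one_apply] <;> ring

lemma smul_one_inj {a b : ℂ} (h : a • (1 : Matrix (Fin 2) (Fin 2) ℂ) = b • 1) : a = b := by
  have := congrFun (congrFun h 0) 0
  simpa using this

/-- traceless commuting matrices multiply to a scalar. -/
lemma scalar_prod (A C : Matrix (Fin 2) (Fin 2) ℂ) (hA : Matrix.trace A = 0)
    (hC : Matrix.trace C = 0) (h : A * C = C * A) :
    A * C = (Matrix.trace (A * C) / 2) • (1 : Matrix (Fin 2) (Fin 2) ℂ) := by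
  have key : A * C + C * A = Matrix.trace (A * C) • (1 : Matrix (Fin 2) (Fin 2) ℂ) := by
    have hA' : A 1 1 = - A 0 0 := by
      have := hA; rw [Matrix.trace_fin_two] at this; linear_combination this
    have hC' : C 1 1 = - C 0 0 := by
      have := hC; rw [Matrix.trace_fin_two] at this; linear_combination this
    ext i j
    fin_cases i <;> fin_cases j <;>
      simp [Matrix.mul_apply, Fin.sum_univ_two, Matrix.trace_fin_two, Matrix.one_apply,
        hA', hC'] <;> ring
  rw [← h] at key
  have key2 : (2 : ℂ) • (A * C) = Matrix.trace (A * C) • (1 : Matrix (Fin 2) (Fin 2) ℂ) := by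
    rw [two_smul]; exact key
  calc A * C = (2:ℂ)⁻¹ • ((2:ℂ) • (A * C)) := by rw [smul_smul]; norm_num
    _ = (2:ℂ)⁻¹ • (Matrix.trace (A * C) • (1 : Matrix (Fin 2) (Fin 2) ℂ)) := by rw [key2]
    _ = (Matrix.trace (A * C) / 2) • (1 : Matrix (Fin 2) (Fin 2) ℂ) := by
        rw [smul_smul]; ring_nf

/-- For pairwise commuting trace-zero 2×2 complex matrices `B i`, the determinant of
`∑ xᵢ Bᵢ` is minus the square of a linear form in `x`. -/
theorem stmt_1 (n : ℕ) (hn : 0 < n) (B : Fin n → Matrix (Fin 2) (Fin 2) ℂ)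
    (hcomm : ∀ i j, B i * B j = B j * B i)
    (htrace : ∀ i, Matrix.trace (B i) = 0) :
    ∃ lam : Fin n → ℂ, ∀ x : Fin n → ℂ,
      (∑ i, x i • B i).det = -(∑ i, x i * lam i) ^ 2 := by
  set c : Fin n → Fin n → ℂ := fun i j => Matrix.trace (B i * B j) / 2 with hcdef
  have hc : ∀ i j, B i * B j = c i j • (1 : Matrix (Fin 2) (Fin 2) ℂ) := fun i j =>
    scalar_prod (B i) (B j) (htrace i) (htrace j) (hcomm i j)
  -- rank one relation
  have hrk : ∀ i j k, c i k * c j k = c i j * c k k := by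
    intro i j k
    have e1 : B i * B k * (B j * B k) = (c i k * c j k) • (1 : Matrix (Fin 2) (Fin 2) ℂ) := by
      rw [hc i k, hc j k, smul_mul_smul_comm, one_mul]
    have e2 : B i * B k * (B j * B k) = (c i j * c k k) • (1 : Matrix (Fin 2) (Fin 2) ℂ) := by
      have h3 : B i * B k * (B j * B k) = B i * B j * (B k * B k) := by
        rw [mul_assoc, mul_assoc, ← mul_assoc (B k), hcomm k j, mul_assoc]
      rw [h3, hc i j, hc k k, smul_mul_smul_comm, one_mul]
    exact smul_one_inj (e1.symm.trans e2)
  -- find lam with c i j = lam i * lam j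
  have hex : ∃ lam : Fin n → ℂ, ∀ i j, c i j = lam i * lam j := by
    by_cases hall : ∀ i, c i i = 0
    · refine ⟨0, fun i j => ?_⟩
      have hsq : c i j * c i j = c i i * c j j := hrk i i j
      rw [hall i, hall j, mul_zero] at hsq
      have : c i j = 0 := by
        have := mul_self_eq_zero.mp hsq
        exact this
      simp [this]
    · push_neg at hall
      obtain ⟨k, hk⟩ := hall
      obtain ⟨μ, hμ⟩ := IsAlgClosed.exists_pow_nat_eq (k := ℂ) (c k k) (n := 2) (by norm_num)
      have hμ0 : μ ≠ 0 := by
        intro h; rw [h] at hμ; simp at hμ; exact hk hμ.symm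
      refine ⟨fun i => c i k / μ, fun i j => ?_⟩
      have : c i k * c j k = c i j * c k k := hrk i j k
      field_simp
      linear_combination c i j * hμ - this
  obtain ⟨lam, hlam⟩ := hex
  refine ⟨lam, fun x => ?_⟩
  set M := ∑ i, x i • B i with hM
  have htrM : Matrix.trace M = 0 := by
    simp [hM, Matrix.trace_sum, Matrix.trace_smul, htrace]
  have key : ∀ i j, (x i • B i) * (x j • B j)
      = ((x i * lam i) * (x j * lam j)) • (1 : Matrix (Fin 2) (Fin 2) ℂ) := by
    intro i j
    rw [smul_mul_smul_comm, hc i j, hlam i j, smul_smul]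
    ring_nf
  have hMM : M * M = ((∑ i, x i * lam i) ^ 2) • (1 : Matrix (Fin 2) (Fin 2) ℂ) := by
    calc M * M = ∑ i, ∑ j, ((x i * lam i) * (x j * lam j)) • (1 : Matrix (Fin 2) (Fin 2) ℂ) := by
          rw [hM, Finset.sum_mul_sum]
          exact Finset.sum_congr rfl fun i _ => Finset.sum_congr rfl fun j _ => key i j
      _ = (∑ i, ∑ j, (x i * lam i) * (x j * lam j)) • (1 : Matrix (Fin 2) (Fin 2) ℂ) := by
          simp only [← Finset.sum_smul]
      _ = ((∑ i, x i * lam i) ^ 2) • (1 : Matrix (Fin 2) (Fin 2) ℂ) := by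
          rw [sq, Finset.sum_mul_sum]
  have hch := ch2 M
  rw [htrM, zero_smul, zero_sub, hMM, ← neg_smul] at hch
  have := smul_one_inj hch
  linear_combination this
end

section
/- Let B₁, …, Bₙ be 2×2 complex matrices that pairwise commute and each have trace zero, and assume that at least one Bⱼ is not nilpotent. Then there exist a single 2×2 complex matrix C with Tr C = 0 and C·C = I (the identity matrix), and complex numbers λ₁, …, λₙ, such that Bᵢ = λᵢ·C for every i. -/
open Matrix

lemma aux_prop (A M : Matrix (Fin 2) (Fin 2) ℂ) (hA : Matrix.trace A = 0)
    (hM : Matrix.trace M = 0) (hc : A * M = M * A)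
    (hd : M 0 0 ^ 2 + M 0 1 * M 1 0 ≠ 0) : ∃ l : ℂ, A = l • M := by
  have hM' : M 0 0 + M 1 1 = 0 := by rw [← Matrix.trace_fin_two, hM]
  have hA' : A 0 0 + A 1 1 = 0 := by rw [← Matrix.trace_fin_two, hA]
  have hM11 : M 1 1 = -M 0 0 := by linear_combination hM'
  have hA11 : A 1 1 = -A 0 0 := by linear_combination hA'
  have e00 := congrFun (congrFun hc 0) 0
  have e01 := congrFun (congrFun hc 0) 1
  have e10 := congrFun (congrFun hc 1) 0
  simp only [Matrix.mul_apply, Fin.sum_univ_two] at e00 e01 e10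
  rw [hM11, hA11] at e01 e10
  by_cases hp : M 0 0 = 0
  · have hq : M 0 1 ≠ 0 := by
      intro h; apply hd; rw [hp, h]; ring
    rw [hp] at e00 e01 e10
    have ha : A 0 0 = 0 := by
      have h2 : A 0 0 * M 0 1 = 0 := by linear_combination (1/2 : ℂ) * e01
      rcases mul_eq_zero.mp h2 with h | h
      · exact h
      · exact absurd h hq
    refine ⟨A 0 1 / M 0 1, ?_⟩
    ext i j
    fin_cases i <;> fin_cases j
    · show A 0 0 = (A 0 1 / M 0 1) • M 0 0
      rw [ha, hp]; simp
    · show A 0 1 = (A 0 1 / M 0 1) • M 0 1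
      rw [smul_eq_mul]; field_simp
    · show A 1 0 = (A 0 1 / M 0 1) • M 1 0
      rw [smul_eq_mul]; field_simp
      linear_combination (-1 : ℂ) * e00
    · show A 1 1 = (A 0 1 / M 0 1) • M 1 1
      rw [hA11, hM11, ha, hp]; simp
  · refine ⟨A 0 0 / M 0 0, ?_⟩
    ext i j
    fin_cases i <;> fin_cases j
    · show A 0 0 = (A 0 0 / M 0 0) • M 0 0
      rw [smul_eq_mul]; field_simp
    · show A 0 1 = (A 0 0 / M 0 0) • M 0 1
      rw [smul_eq_mul]; field_simp
      linear_combination -(1/2 : ℂ) * e01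
    · show A 1 0 = (A 0 0 / M 0 0) • M 1 0
      rw [smul_eq_mul]; field_simp
      linear_combination (1/2 : ℂ) * e10
    · show A 1 1 = (A 0 0 / M 0 0) • M 1 1
      rw [hA11, hM11, smul_eq_mul]; field_simp

/-- Pairwise commuting trace-free 2×2 complex matrices, one of which is not nilpotent,
are all scalar multiples `Bᵢ = λᵢ • C` of a single trace-free involution `C`. -/
theorem stmt_3 (n : ℕ) (B : Fin n → Matrix (Fin 2) (Fin 2) ℂ)
    (hcomm : ∀ i j, B i * B j = B j * B i)
    (htrace : ∀ i, Matrix.trace (B i) = 0)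
    (hnn : ∃ j, ¬ IsNilpotent (B j)) :
    ∃ C : Matrix (Fin 2) (Fin 2) ℂ, Matrix.trace C = 0 ∧ C * C = 1 ∧
      ∃ lam : Fin n → ℂ, ∀ i, B i = lam i • C := by
  obtain ⟨j, hj⟩ := hnn
  set M := B j with hMdef
  have hM' : M 0 0 + M 1 1 = 0 := by rw [← Matrix.trace_fin_two]; exact htrace j
  have hM11 : M 1 1 = -M 0 0 := by linear_combination hM'
  set d : ℂ := M 0 0 ^ 2 + M 0 1 * M 1 0 with hddef
  have hMsq : M * M = d • 1 := by
    ext i k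
    fin_cases i <;> fin_cases k
    · show (M * M) 0 0 = d • (1 : Matrix (Fin 2) (Fin 2) ℂ) 0 0
      simp [Matrix.mul_apply, Fin.sum_univ_two, Matrix.one_apply, hM11, hddef]; ring
    · show (M * M) 0 1 = d • (1 : Matrix (Fin 2) (Fin 2) ℂ) 0 1
      simp [Matrix.mul_apply, Fin.sum_univ_two, Matrix.one_apply, hM11, hddef]; ring
    · show (M * M) 1 0 = d • (1 : Matrix (Fin 2) (Fin 2) ℂ) 1 0
      simp [Matrix.mul_apply, Fin.sum_univ_two, Matrix.one_apply, hM11, hddef]; ring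
    · show (M * M) 1 1 = d • (1 : Matrix (Fin 2) (Fin 2) ℂ) 1 1
      simp [Matrix.mul_apply, Fin.sum_univ_two, Matrix.one_apply, hM11, hddef]; ring
  have hd : d ≠ 0 := by
    intro h
    apply hj
    refine ⟨2, ?_⟩
    rw [pow_two, hMsq, h, zero_smul]
  obtain ⟨μ, hμ⟩ := IsAlgClosed.exists_pow_nat_eq d (n := 2) (by norm_num)
  have hμ0 : μ ≠ 0 := by
    intro h; apply hd; rw [← hμ, h]; ring
  refine ⟨μ⁻¹ • M, ?_, ?_, ?_⟩
  · rw [Matrix.trace_smul, htrace j, smul_zero]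
  · rw [Matrix.smul_mul, Matrix.mul_smul, hMsq, smul_smul, smul_smul]
    have hone : μ⁻¹ * μ⁻¹ * d = 1 := by
      rw [← hμ]; field_simp
    rw [hone, one_smul]
  · have key : ∀ i, ∃ l : ℂ, B i = l • M := fun i =>
      aux_prop (B i) M (htrace i) (htrace j) (hcomm i j) hd
    choose l hl using key
    refine ⟨fun i => μ * l i, fun i => ?_⟩
    rw [hl i, smul_smul]
    congr 1
    field_simp
end

section
/- Let V be a finite-dimensional complex vector space and let W be a ℂ-linear subspace of the space of quadratic forms on V such that every element q of W is the square of a linear functional, i.e. for each q ∈ W there exists a linear map ℓ : V → ℂ with q(v) = (ℓ(v))² for all v ∈ V. Then W has complex dimension at most 1. -/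
/-- If `l ≠ 0` and `l² + l'² = l''²` pointwise, then `l'` is a scalar multiple of `l`. -/
lemma square_sum_dep {V : Type*} [AddCommGroup V] [Module ℂ V]
    (l l' : V →ₗ[ℂ] ℂ) (hl : l ≠ 0) (l'' : V →ₗ[ℂ] ℂ)
    (h : ∀ v : V, (l v) ^ 2 + (l' v) ^ 2 = (l'' v) ^ 2) :
    ∃ c : ℂ, l' = c • l := by
  obtain ⟨v0, hv0⟩ : ∃ v0, l v0 ≠ 0 := by
    by_contra hc
    push_neg at hc
    exact hl (LinearMap.ext fun v => hc v)
  set v1 : V := (l v0)⁻¹ • v0 with hv1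
  have hlv1 : l v1 = 1 := by
    simp [hv1, inv_mul_cancel₀ hv0]
  by_cases hm : ∀ w : V, l w = 0 → l' w = 0
  · refine ⟨l' v1, ?_⟩
    ext u
    have h0 : l (u - (l u) • v1) = 0 := by simp [hlv1]
    have := hm _ h0
    simp only [map_sub, map_smul, smul_eq_mul, sub_eq_zero] at this
    simp [this, mul_comm]
  · push_neg at hm
    obtain ⟨w0, hw0l, hw0⟩ := hm
    set w : V := (l' w0)⁻¹ • w0 with hw
    have hlw : l w = 0 := by simp [hw, hw0l]
    have hl'w : l' w = 1 := by simp [hw, inv_mul_cancel₀ hw0]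
    set v : V := v1 - (l' v1) • w with hv
    have hlv : l v = 1 := by simp [hv, hlw, hlv1]
    have hl'v : l' v = 0 := by simp [hv, hl'w]
    exfalso
    have h1 := h v
    have h2 := h w
    have h3 := h (v + w)
    rw [hlv, hl'v] at h1
    rw [hlw, hl'w] at h2
    rw [map_add, map_add, map_add, hlv, hlw, hl'v, hl'w] at h3
    set a := l'' v
    set b := l'' w
    have hab : a * b = 0 := by linear_combination (h1 + h2 - h3) / 2
    rcases mul_eq_zero.mp hab with h0 | h0
    · rw [h0] at h1; simp at h1
    · rw [h0] at h2; simp at h2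

/-- A linear subspace of the space of quadratic forms on a finite-dimensional complex
vector space consisting entirely of squares of linear functionals (i.e. contained in the
Veronese cone) has dimension at most one. -/
theorem stmt_4 (V : Type*) [AddCommGroup V] [Module ℂ V] [FiniteDimensional ℂ V]
    (W : Submodule ℂ (QuadraticForm ℂ V))
    (h : ∀ q ∈ W, ∃ l : V →ₗ[ℂ] ℂ, ∀ v : V, q v = (l v) ^ 2) :
    Module.finrank ℂ W ≤ 1 := by
  by_cases hW : W = ⊥
  · rw [hW, finrank_bot]; exact zero_le_one
  · obtain ⟨q, hqW, hq0⟩ := Submodule.exists_mem_ne_zero_of_ne_bot hW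
    obtain ⟨l, hl⟩ := h q hqW
    have hlne : l ≠ 0 := by
      intro h0
      apply hq0
      ext v
      simp [hl v, h0]
    apply finrank_le_one (⟨q, hqW⟩ : W)
    rintro ⟨q', hq'W⟩
    obtain ⟨l', hl'⟩ := h q' hq'W
    obtain ⟨l'', hl''⟩ := h (q + q') (W.add_mem hqW hq'W)
    have hsum : ∀ v : V, (l v) ^ 2 + (l' v) ^ 2 = (l'' v) ^ 2 := by
      intro v
      rw [← hl v, ← hl' v, ← hl'' v]
      simp
    obtain ⟨c, hc⟩ := square_sum_dep l l' hlne l'' hsum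
    refine ⟨c ^ 2, ?_⟩
    ext v
    have : l' v = c * l v := by rw [hc]; simp
    simp only [Submodule.coe_smul, QuadraticMap.smul_apply, smul_eq_mul]
    rw [hl v, hl' v, this]
    ring
end

section
/- Let K be a field, V a finite-dimensional K-vector space of dimension n, φ an endomorphism of V, g an invertible endomorphism of V, and t ∈ K a scalar such that g ∘ φ ∘ g⁻¹ = t • φ. If t^k ≠ 1 for every integer k with 1 ≤ k ≤ n, then φ is nilpotent. -/
open Polynomial Matrix

private lemma aux_coeff_comp_C_mul_X {K : Type*} [Field K] (p : K[X]) (t : K) (i : ℕ) :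
    (p.comp (C t * X)).coeff i = p.coeff i * t ^ i := by
  induction p using Polynomial.induction_on' with
  | add p q hp hq => simp [add_comp, hp, hq, add_mul]
  | monomial m a =>
    rw [← C_mul_X_pow_eq_monomial, mul_comp, C_comp, pow_comp, X_comp]
    rw [mul_pow, ← C_pow, ← mul_assoc, ← C_mul, coeff_C_mul, coeff_C_mul, coeff_X_pow]
    rcases eq_or_ne i m with h | h
    · subst h
      simp [mul_comm, mul_assoc]
    · simp [h]

private lemma aux_charpoly_smul {K : Type*} [Field K] {ι : Type*} [DecidableEq ι] [Fintype ι]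
    (M : Matrix ι ι K) (t : K) :
    (t • M).charpoly.comp (C t * X) = C t ^ (Fintype.card ι) * M.charpoly := by
  have h1 : (t • M).charpoly.comp (C t * X)
      = ((charmatrix (t • M)).map (eval₂RingHom C (C t * X) : K[X] →+* K[X])).det := by
    rw [← RingHom.mapMatrix_apply, ← RingHom.map_det]
    rfl
  have h2 : (charmatrix (t • M)).map (eval₂RingHom C (C t * X) : K[X] →+* K[X])
      = C t • charmatrix M := by
    funext i j
    by_cases h : i = j
    · subst h
      simp only [Matrix.map_apply, Matrix.smul_apply, charmatrix_apply_eq, smul_eq_mul,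
        coe_eval₂RingHom, eval₂_sub, eval₂_X, eval₂_C]
      rw [mul_sub, ← C_mul]
    · simp only [Matrix.map_apply, Matrix.smul_apply, charmatrix_apply_ne _ _ _ h,
        smul_eq_mul, coe_eval₂RingHom, eval₂_neg, eval₂_C]
      rw [mul_neg, ← C_mul]
  rw [h1, h2, Matrix.det_smul]
  rfl

/-- If an invertible endomorphism `g` conjugates `φ` to `t • φ` and `t^k ≠ 1` for all
`1 ≤ k ≤ n = dim V`, then `φ` is nilpotent. -/
theorem stmt_6 {K : Type*} [Field K] {V : Type*} [AddCommGroup V] [Module K V]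
    [FiniteDimensional K V] (n : ℕ) (hdim : Module.finrank K V = n)
    (φ : Module.End K V) (g : V ≃ₗ[K] V) (t : K)
    (hconj : (g : V →ₗ[K] V) ∘ₗ φ ∘ₗ (g.symm : V →ₗ[K] V) = t • φ)
    (ht : ∀ k : ℕ, 1 ≤ k → k ≤ n → t ^ k ≠ 1) :
    IsNilpotent φ := by
  classical
  rcases eq_or_ne t 0 with ht0 | ht0
  · -- t = 0 : conjugate is 0, hence φ = 0
    subst ht0
    have hφ0 : φ = 0 := by
      ext x
      have h := LinearMap.congr_fun hconj (g x)
      simp only [LinearMap.comp_apply, LinearEquiv.coe_coe, LinearEquiv.symm_apply_apply,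
        LinearMap.smul_apply, zero_smul, LinearMap.zero_apply] at h
      have := congrArg g.symm h
      simpa using this
    exact hφ0 ▸ ⟨1, by simp⟩
  -- charpoly of t • φ equals charpoly of φ (conjugation invariance)
  have hcp : (t • φ).charpoly = φ.charpoly := by
    rw [← hconj]
    exact g.charpoly_conj φ
  have hdeg : φ.charpoly.natDegree = n := by
    rw [φ.charpoly_natDegree, hdim]
  let b := Module.finBasis K V
  have hmat : LinearMap.toMatrix b b (t • φ) = t • LinearMap.toMatrix b b φ := by simp
  have key : φ.charpoly.comp (C t * X) = C (t ^ n) * φ.charpoly := by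
    have h1 : (t • φ).charpoly = (t • LinearMap.toMatrix b b φ).charpoly := by
      rw [← hmat, LinearMap.charpoly_toMatrix]
    have h2 : φ.charpoly = (LinearMap.toMatrix b b φ).charpoly :=
      (LinearMap.charpoly_toMatrix φ b).symm
    have h3 := aux_charpoly_smul (LinearMap.toMatrix b b φ) t
    rw [← h1, hcp, h2] at h3
    rw [h2, h3, ← C_pow]
    congr 2
    simp [hdim]
  have hcoeff : ∀ i : ℕ, i < n → φ.charpoly.coeff i = 0 := by
    intro i hi
    have h := congrArg (fun p => p.coeff i) key
    simp only [aux_coeff_comp_C_mul_X, coeff_C_mul] at h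
    -- h : coeff i * t ^ i = t ^ n * coeff i
    by_contra hne
    rw [mul_comm (t ^ n)] at h
    have h4 : t ^ i = t ^ n := mul_left_cancel₀ hne h
    have h5 : t ^ (n - i) = 1 := by
      have hmul : t ^ i * t ^ (n - i) = t ^ i * 1 := by
        rw [mul_one, ← pow_add, h4]
        congr 1
        omega
      exact mul_left_cancel₀ (pow_ne_zero _ ht0) hmul
    exact ht (n - i) (by omega) (by omega) h5
  have hXn : φ.charpoly = X ^ n := by
    ext i
    rcases lt_trichotomy i n with h | h | h
    · rw [hcoeff i h, coeff_X_pow, if_neg h.ne]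
    · subst h
      rw [coeff_X_pow, if_pos rfl, ← hdeg]
      exact φ.charpoly_monic.coeff_natDegree
    · rw [coeff_X_pow, if_neg (by omega), coeff_eq_zero_of_natDegree_lt (by omega)]
  refine ⟨n, ?_⟩
  have h := φ.aeval_self_charpoly
  rwa [hXn, map_pow, aeval_X] at h
end

section
/- Let V be a 2-dimensional complex vector space, t ∈ ℂ with t ≠ 0, t ≠ 1 and t ≠ −1, let φ be a nonzero endomorphism of V, and let g be an invertible endomorphism of V with g ∘ φ = t • (φ ∘ g). Then there exists a basis (v₁, v₂) of V consisting of eigenvectors of g for two distinct nonzero eigenvalues μ and tμ (g·v₁ = μ·v₁ and g·v₂ = tμ·v₂), such that φ(v₂) = 0 and φ(v₁) is a nonzero multiple of v₂. -/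
/-- A nonzero endomorphism `φ` of a 2-dimensional complex vector space intertwined by an
invertible `g` with `g ∘ φ = t • (φ ∘ g)` for `t ≠ 0, ±1` puts `g` in diagonal form with
distinct nonzero eigenvalues `μ, tμ` and makes `φ` strictly lower triangular. -/
theorem stmt_7 (V : Type*) [AddCommGroup V] [Module ℂ V]
    (hdim : Module.finrank ℂ V = 2) (t : ℂ) (ht0 : t ≠ 0) (ht1 : t ≠ 1) (htm1 : t ≠ -1)
    (φ : Module.End ℂ V) (hφ : φ ≠ 0) (g : Module.End ℂ V) (hg : IsUnit g)
    (h : g ∘ₗ φ = t • (φ ∘ₗ g)) :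
    ∃ (b : Module.Basis (Fin 2) ℂ V) (μ : ℂ), μ ≠ 0 ∧ t * μ ≠ 0 ∧ μ ≠ t * μ ∧
      g (b 0) = μ • b 0 ∧ g (b 1) = (t * μ) • b 1 ∧ φ (b 1) = 0 ∧
      ∃ c : ℂ, c ≠ 0 ∧ φ (b 0) = c • b 1 := by
  have hfd : FiniteDimensional ℂ V := FiniteDimensional.of_finrank_pos (by omega)
  have hnt : Nontrivial V := Module.nontrivial_of_finrank_pos (R := ℂ) (by omega)
  have ginj : Function.Injective g := ((Module.End.isUnit_iff g).mp hg).injective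
  have hrel : ∀ v, g (φ v) = t • φ (g v) := fun v => by
    simpa using LinearMap.congr_fun h v
  -- Key claim: there is an eigenvector of `g` not killed by `φ`.
  have key : ∃ (w : V) (μ : ℂ), g w = μ • w ∧ φ w ≠ 0 := by
    obtain ⟨μ₀, hμ₀⟩ := Module.End.exists_eigenvalue g
    obtain ⟨w, hw⟩ := hμ₀.exists_hasEigenvector
    have hgw : g w = μ₀ • w := hw.apply_eq_smul
    have hw0 : w ≠ 0 := hw.right
    have hμ00 : μ₀ ≠ 0 := by
      rintro rfl
      exact hw0 (ginj (by simp [hgw]))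
    by_cases hφw : φ w = 0
    · obtain ⟨u, hφu⟩ : ∃ u, φ u ≠ 0 := by
        by_contra hc
        push_neg at hc
        exact hφ (LinearMap.ext (by simpa using hc))
      have hindep : LinearIndependent ℂ ![w, u] := by
        rw [LinearIndependent.pair_iff]
        intro s r hsr
        have h1 : r • φ u = 0 := by
          have := congrArg φ hsr
          simpa [hφw] using this
        have hr : r = 0 := by
          rcases smul_eq_zero.mp h1 with h' | h'
          · exact h'
          · exact absurd h' hφu
        subst hr
        simp only [zero_smul, add_zero, smul_eq_zero] at hsr
        exact ⟨hsr.resolve_right hw0, rfl⟩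
      have hcard : Fintype.card (Fin 2) = Module.finrank ℂ V := by simp [hdim]
      let B := basisOfLinearIndependentOfCardEqFinrank hindep hcard
      have hB : ⇑B = ![w, u] := coe_basisOfLinearIndependentOfCardEqFinrank _ _
      set bb := B.repr (g u) 0 with hbb
      set a := B.repr (g u) 1 with ha'
      have hgu : g u = bb • w + a • u := by
        have := B.sum_repr (g u)
        rw [Fin.sum_univ_two] at this
        rw [← this, hB]
        simp [hbb, ha']
      have h1 : φ (g u) = a • φ u := by
        rw [hgu]
        simp [hφw]
      have hgφu : g (φ u) = (t * a) • φ u := by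
        rw [hrel u, h1, smul_smul]
      by_cases h2 : φ (φ u) = 0
      · -- need another eigenvector
        by_cases ha : a = μ₀
        · exfalso
          set α := B.repr (φ u) 0 with hα
          set β := B.repr (φ u) 1 with hβ
          have hpu : φ u = α • w + β • u := by
            have := B.sum_repr (φ u)
            rw [Fin.sum_univ_two] at this
            rw [← this, hB]
            simp [hα, hβ]
          have hβ0 : β = 0 := by
            have : β • φ u = 0 := by
              have := congrArg φ hpu
              rw [h2] at this
              simpa [hφw] using this.symm
            rcases smul_eq_zero.mp this with h' | h'
            · exact h'
            · exact absurd h' hφu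
          have hgφu' : g (φ u) = μ₀ • φ u := by
            rw [hpu, hβ0]
            simp [hgw, smul_smul, mul_comm]
          have : (t * μ₀) • φ u = μ₀ • φ u := by
            rw [← hgφu', hgφu, ha]
          have ht : t * μ₀ = μ₀ := by
            by_contra hne
            exact hφu (by
              have := sub_eq_zero.mpr this
              rw [← sub_smul] at this
              exact (smul_eq_zero.mp this).resolve_left (sub_ne_zero.mpr hne))
          exact ht1 (by field_simp at ht; exact ht)
        · -- a ≠ μ₀ : shift u to an eigenvector
          refine ⟨u + (bb / (a - μ₀)) • w, a, ?_, by simpa [hφw] using hφu⟩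
          have hsub : a - μ₀ ≠ 0 := sub_ne_zero.mpr ha
          have e1 : g (u + (bb / (a - μ₀)) • w) =
              (bb • w + a • u) + (bb / (a - μ₀)) • (μ₀ • w) := by
            rw [map_add, map_smul, hgu, hgw]
          rw [e1, smul_add]
          match_scalars
          · field_simp
            ring
          · ring
      · exact ⟨φ u, t * a, hgφu, h2⟩
    · exact ⟨w, μ₀, hgw, hφw⟩
  obtain ⟨w, μ, hgw, hφw⟩ := key
  have hw0 : w ≠ 0 := fun hh => hφw (by simp [hh])
  have hμ0 : μ ≠ 0 := by
    rintro rfl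
    exact hw0 (ginj (by simp [hgw]))
  have htμ0 : t * μ ≠ 0 := mul_ne_zero ht0 hμ0
  have hd1 : μ ≠ t * μ := fun hh => ht1 (by field_simp at hh; tauto)
  have hgb1 : g (φ w) = (t * μ) • φ w := by
    rw [hrel w, hgw, map_smul, smul_smul]
  have hφb1 : φ (φ w) = 0 := by
    by_contra h2
    have hgb2 : g (φ (φ w)) = (t * (t * μ)) • φ (φ w) := by
      rw [hrel (φ w), hgb1, map_smul, smul_smul]
    have hinj3 : Function.Injective ![μ, t * μ, t * (t * μ)] := by
      have hd2 : μ ≠ t * (t * μ) := by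
        intro hh
        have htt : t * t = 1 := by
          have : (t * t - 1) * μ = 0 := by ring_nf; linear_combination -hh
          rcases mul_eq_zero.mp this with h' | h'
          · exact sub_eq_zero.mp h'
          · exact absurd h' hμ0
        rcases mul_self_eq_one_iff.mp htt with h' | h'
        · exact ht1 h'
        · exact htm1 h'
      have hd3 : t * μ ≠ t * (t * μ) := fun hh =>
        ht1 (by field_simp at hh; tauto)
      intro i j hij
      fin_cases i <;> fin_cases j <;> simp_all
    have hli := g.eigenvectors_linearIndependent' ![μ, t * μ, t * (t * μ)] hinj3
      ![w, φ w, φ (φ w)] (by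
        intro i
        fin_cases i
        · exact ⟨Module.End.mem_eigenspace_iff.mpr hgw, hw0⟩
        · exact ⟨Module.End.mem_eigenspace_iff.mpr hgb1, hφw⟩
        · exact ⟨Module.End.mem_eigenspace_iff.mpr hgb2, h2⟩)
    have := hli.fintype_card_le_finrank
    rw [hdim] at this
    simp at this
  have hinj2 : Function.Injective ![μ, t * μ] := by
    intro i j hij
    fin_cases i <;> fin_cases j <;> simp_all
  have hli2 := g.eigenvectors_linearIndependent' ![μ, t * μ] hinj2 ![w, φ w] (by
    intro i
    fin_cases i
    · exact ⟨Module.End.mem_eigenspace_iff.mpr hgw, hw0⟩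
    · exact ⟨Module.End.mem_eigenspace_iff.mpr hgb1, hφw⟩)
  have hcard : Fintype.card (Fin 2) = Module.finrank ℂ V := by simp [hdim]
  let B := basisOfLinearIndependentOfCardEqFinrank hli2 hcard
  have hB : ⇑B = ![w, φ w] := coe_basisOfLinearIndependentOfCardEqFinrank _ _
  have hB0 : B 0 = w := by rw [hB]; rfl
  have hB1 : B 1 = φ w := by rw [hB]; rfl
  exact ⟨B, μ, hμ0, htμ0, hd1, by rw [hB0]; exact hgw, by rw [hB1]; exact hgb1,
    by rw [hB1]; exact hφb1, 1, one_ne_zero, by rw [hB0, hB1, one_smul]⟩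
end
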